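/- arXiv:2407.11200 — 2 statements merged into one kernel-verified Lean document; each statement's English description precedes it below -/
import Mathlib

section
/- Let (W,S) be a Coxeter system, x ∈ W and s ∈ S with x < xs. Then in the Hecke algebra, b_x · b_s = b_{xs} + Σ_{y : ys < y} μ(y,x) · b_y, where the sum is over y ∈ W with ys < y. -/
/-!  Setup: the Hecke algebra of an arbitrary Coxeter system, its bar involution,
its Kazhdan–Lusztig basis, and (inverse) Kazhdan–Lusztig polynomials.  -/

noncomputable section

open LaurentPolynomial

namespace KLMonotonicity

/-- Coefficient-wise inequality `p ⪯ q` of Laurent polynomials in `v`: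
`q - p` has non-negative coefficients. -/
def CoeffLE (p q : LaurentPolynomial ℤ) : Prop := ∀ n : ℤ, p.coeff n ≤ q.coeff n

/-- `p ∈ v·ℤ[v]`, i.e. all monomials of `p` have strictly positive degree. -/
def MemVZv (p : LaurentPolynomial ℤ) : Prop := ∀ n : ℤ, n ≤ 0 → p.coeff n = 0

variable {B W : Type} [Group W] {M : CoxeterMatrix B}

/-- The Bruhat order on a Coxeter group: the reflexive-transitive closure of the
relation `a → a·t` for `t` a reflection with `ℓ(a) < ℓ(a·t)`. -/
def BruhatLE (cs : CoxeterSystem M W) : W → W → Prop :=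
  Relation.ReflTransGen fun a b =>
    (∃ t : W, cs.IsReflection t ∧ b = a * t) ∧ cs.length a < cs.length b

/-- The strict Bruhat order. -/
def BruhatLT (cs : CoxeterSystem M W) (a b : W) : Prop := BruhatLE cs a b ∧ a ≠ b

/-- The data of (a realisation of) the Hecke algebra of the Coxeter system `cs` on
a `ℤ[v,v⁻¹]`-algebra `H`: a standard basis `δ` indexed by `W`, satisfying the
quadratic relations `(δ_s + v)(δ_s - v⁻¹) = 0` for each simple reflection `s` and
the relations `δ_x · δ_y = δ_{xy}` whenever `ℓ(x) + ℓ(y) = ℓ(xy)`.  These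
relations determine the multiplication of `H` completely, so any such `H` *is*
the Hecke algebra of `(W,S)`.  Here `v = T 1` and `v⁻¹ = T (-1)`. -/
structure HeckeAlgebra (cs : CoxeterSystem M W) (H : Type)
    [Ring H] [Algebra (LaurentPolynomial ℤ) H] where
  /-- the standard basis `{δ_x | x ∈ W}` -/
  δ : Module.Basis W (LaurentPolynomial ℤ) H
  quadratic : ∀ i : B,
    (δ (cs.simple i) + algebraMap (LaurentPolynomial ℤ) H (T 1)) *
      (δ (cs.simple i) - algebraMap (LaurentPolynomial ℤ) H (T (-1))) = 0
  mul_of_length_add : ∀ x y : W, cs.length x + cs.length y = cs.length (x * y) →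
    δ x * δ y = δ (x * y)

variable {cs : CoxeterSystem M W} {H : Type} [Ring H] [Algebra (LaurentPolynomial ℤ) H]

/-- The bar involution of the Hecke algebra: the unique ring involution which is
semilinear over `v ↦ v⁻¹` and sends `δ_x` to `(δ_{x⁻¹})⁻¹`. -/
structure BarInvolution (A : HeckeAlgebra cs H) where
  bar : H ≃+* H
  bar_bar : ∀ h : H, bar (bar h) = h
  bar_smul : ∀ (p : LaurentPolynomial ℤ) (h : H), bar (p • h) = (invert p) • bar h
  bar_δ_mul : ∀ x : W, bar (A.δ x) * A.δ x⁻¹ = 1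
  mul_bar_δ : ∀ x : W, A.δ x⁻¹ * bar (A.δ x) = 1

/-- The data of the Kazhdan–Lusztig basis `{b_x | x ∈ W}`: it is bar-invariant and
`b_x ∈ δ_x + Σ_{y < x} v ℤ[v] · δ_y`.  These conditions determine `b` uniquely. -/
structure KLBasis (A : HeckeAlgebra cs H) (bar : BarInvolution A) where
  b : W → H
  selfDual : ∀ x : W, bar.bar (b x) = b x
  repr_self : ∀ x : W, A.δ.repr (b x) x = 1
  repr_lt : ∀ x y : W, y ≠ x → A.δ.repr (b x) y ≠ 0 → BruhatLT cs y x
  repr_mem : ∀ x y : W, y ≠ x → MemVZv (A.δ.repr (b x) y)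

/-- The Kazhdan–Lusztig polynomial `h_{y,x}`, defined by `b_x = Σ_y h_{y,x} δ_y`. -/
def KLBasis.h {A : HeckeAlgebra cs H} {bar : BarInvolution A} (KL : KLBasis A bar)
    (y x : W) : LaurentPolynomial ℤ := A.δ.repr (KL.b x) y

/-- `μ(y,x)`: the coefficient of `v` in the Kazhdan–Lusztig polynomial `h_{y,x}`. -/
def KLBasis.mu {A : HeckeAlgebra cs H} {bar : BarInvolution A} (KL : KLBasis A bar)
    (y x : W) : ℤ := (KL.h y x).coeff 1

/-- `hinv` is the family of inverse Kazhdan–Lusztig polynomials `h^{y,x}` for the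
Kazhdan–Lusztig basis `b`, i.e. `δ_x = Σ_y (-1)^{ℓ(x) - ℓ(y)} h^{y,x} b_y`
(note `(-1)^{ℓ(x) - ℓ(y)} = (-1)^{ℓ(x) + ℓ(y)}`), the sum being finite. -/
def IsInverseKL (A : HeckeAlgebra cs H) (b : W → H)
    (hinv : W → W → LaurentPolynomial ℤ) : Prop :=
  ∀ x : W, (Function.support fun y => hinv y x).Finite ∧
    A.δ x = ∑ᶠ y : W,
      (((-1 : LaurentPolynomial ℤ) ^ (cs.length x + cs.length y)) * hinv y x) • b y

variable {A : HeckeAlgebra cs H} {bar : BarInvolution A}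

/-! ### auxiliary lemmas -/

attribute [local instance] Classical.propDecidable

-- Bruhat order basics
lemma BruhatLE.length_le {a b : W} (h : BruhatLE cs a b) : cs.length a ≤ cs.length b := by
  induction h with
  | refl => exact le_refl _
  | tail _ h ih => exact ih.trans (le_of_lt h.2)

lemma BruhatLT.length_lt {a b : W} (h : BruhatLT cs a b) : cs.length a < cs.length b := by
  obtain ⟨hle, hne⟩ := h
  rcases hle.cases_tail with rfl | ⟨c, hc, hr⟩
  · exact absurd rfl hne
  · exact lt_of_le_of_lt (BruhatLE.length_le hc) hr.2

lemma bruhatLT_mul_simple_iff (y : W) (i : B) :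
    BruhatLT cs (y * cs.simple i) y ↔ cs.length (y * cs.simple i) < cs.length y := by
  constructor
  · exact BruhatLT.length_lt
  · intro h
    refine ⟨Relation.ReflTransGen.single ⟨⟨cs.simple i, cs.isReflection_simple i, by
      rw [mul_assoc, cs.simple_mul_simple_self, mul_one]⟩, ?_⟩, ?_⟩
    · exact h
    · intro he; rw [he] at h; exact lt_irrefl _ h




lemma T_mul_T_neg : (T 1 : LaurentPolynomial ℤ) * T (-1) = 1 := by
  rw [← T_add]; norm_num

lemma delta_one (A : HeckeAlgebra cs H) (bar : BarInvolution A) : A.δ 1 = 1 := by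
  have h11 : A.δ 1 * A.δ 1 = A.δ 1 := by
    simpa using A.mul_of_length_add 1 1 (by simp)
  have h2 := bar.mul_bar_δ 1
  rw [inv_one] at h2
  calc A.δ 1 = A.δ 1 * (A.δ 1 * bar.bar (A.δ 1)) := by rw [h2, mul_one]
    _ = (A.δ 1 * A.δ 1) * bar.bar (A.δ 1) := by rw [mul_assoc]
    _ = A.δ 1 * bar.bar (A.δ 1) := by rw [h11]
    _ = 1 := h2

lemma simple_sq (A : HeckeAlgebra cs H) (i : B) :
    A.δ (cs.simple i) * A.δ (cs.simple i)
      = 1 + ((T (-1) - T 1 : LaurentPolynomial ℤ)) • A.δ (cs.simple i) := by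
  set a := A.δ (cs.simple i) with ha
  set v := algebraMap (LaurentPolynomial ℤ) H (T 1) with hv
  set w := algebraMap (LaurentPolynomial ℤ) H (T (-1)) with hw
  have q : (a + v) * (a - w) = 0 := A.quadratic i
  have h1 : v * w = 1 := by rw [hv, hw, ← map_mul, T_mul_T_neg, map_one]
  have hc : a * w = w * a := (Algebra.commutes _ _).symm
  have hsm : (T (-1) - T 1 : LaurentPolynomial ℤ) • a = w * a - v * a := by
    rw [Algebra.smul_def, map_sub, sub_mul, ← hv, ← hw]
  rw [hsm, ← sub_eq_zero]
  have key : a * a - (1 + (w * a - v * a)) =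
      (a + v) * (a - w) + (v * w - 1) + (a * w - w * a) := by noncomm_ring
  rw [key, q, h1, hc]; abel

lemma delta_mul_simple (A : HeckeAlgebra cs H) (y : W) (i : B) :
    A.δ y * A.δ (cs.simple i) = A.δ (y * cs.simple i) +
      (if cs.length (y * cs.simple i) < cs.length y then
        ((T (-1) - T 1 : LaurentPolynomial ℤ)) • A.δ y else 0) := by
  rcases cs.length_mul_simple y i with h | h
  · rw [if_neg (by omega), add_zero]
    exact A.mul_of_length_add y _ (by rw [cs.length_simple]; omega)
  · rw [if_pos (by omega)]
    have hys : y * cs.simple i * cs.simple i = y := by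
      rw [mul_assoc, cs.simple_mul_simple_self, mul_one]
    have hy : A.δ (y * cs.simple i) * A.δ (cs.simple i) = A.δ y := by
      have h2 := A.mul_of_length_add (y * cs.simple i) (cs.simple i)
        (by rw [cs.length_simple, hys]; omega)
      rwa [hys] at h2
    calc A.δ y * A.δ (cs.simple i)
        = (A.δ (y * cs.simple i) * A.δ (cs.simple i)) * A.δ (cs.simple i) := by rw [hy]
      _ = A.δ (y * cs.simple i) * (A.δ (cs.simple i) * A.δ (cs.simple i)) := by
          rw [mul_assoc]
      _ = A.δ (y * cs.simple i) * (1 + (T (-1) - T 1) • A.δ (cs.simple i)) := by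
          rw [simple_sq]
      _ = A.δ (y * cs.simple i) + (T (-1) - T 1) • (A.δ (y * cs.simple i) * A.δ (cs.simple i)) := by
          rw [mul_add, mul_one, mul_smul_comm]
      _ = _ := by rw [hy]

lemma simple_mul_delta (A : HeckeAlgebra cs H) (y : W) (i : B) :
    A.δ (cs.simple i) * A.δ y = A.δ (cs.simple i * y) +
      (if cs.length (cs.simple i * y) < cs.length y then
        ((T (-1) - T 1 : LaurentPolynomial ℤ)) • A.δ y else 0) := by
  rcases cs.length_simple_mul y i with h | h
  · rw [if_neg (by omega), add_zero]
    exact A.mul_of_length_add _ y (by rw [cs.length_simple]; omega)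
  · rw [if_pos (by omega)]
    have hys : cs.simple i * (cs.simple i * y) = y := by
      rw [← mul_assoc, cs.simple_mul_simple_self, one_mul]
    have hy : A.δ (cs.simple i) * A.δ (cs.simple i * y) = A.δ y := by
      have h2 := A.mul_of_length_add (cs.simple i) (cs.simple i * y)
        (by rw [cs.length_simple, hys]; omega)
      rwa [hys] at h2
    calc A.δ (cs.simple i) * A.δ y
        = A.δ (cs.simple i) * (A.δ (cs.simple i) * A.δ (cs.simple i * y)) := by rw [hy]
      _ = (A.δ (cs.simple i) * A.δ (cs.simple i)) * A.δ (cs.simple i * y) := by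
          rw [mul_assoc]
      _ = (1 + (T (-1) - T 1) • A.δ (cs.simple i)) * A.δ (cs.simple i * y) := by
          rw [simple_sq]
      _ = A.δ (cs.simple i * y) + (T (-1) - T 1) • (A.δ (cs.simple i) * A.δ (cs.simple i * y)) := by
          rw [add_mul, one_mul, smul_mul_assoc]
      _ = _ := by rw [hy]

lemma bar_simple (A : HeckeAlgebra cs H) (bar : BarInvolution A) (i : B) :
    bar.bar (A.δ (cs.simple i)) = A.δ (cs.simple i) + ((T 1 - T (-1) : LaurentPolynomial ℤ)) • 1 := by
  have h1 : bar.bar (A.δ (cs.simple i)) * A.δ (cs.simple i) = 1 := by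
    have := bar.bar_δ_mul (cs.simple i); rwa [cs.inv_simple] at this
  have hX : A.δ (cs.simple i) * (A.δ (cs.simple i) + ((T 1 - T (-1) : LaurentPolynomial ℤ)) • 1) = 1 := by
    rw [mul_add, simple_sq, mul_smul_comm, mul_one]
    have : (T (-1) - T 1 : LaurentPolynomial ℤ) • A.δ (cs.simple i)
        + (T 1 - T (-1) : LaurentPolynomial ℤ) • A.δ (cs.simple i) = 0 := by
      rw [← add_smul]; simp
    rw [add_assoc, this, add_zero]
  calc bar.bar (A.δ (cs.simple i))
      = bar.bar (A.δ (cs.simple i)) * (A.δ (cs.simple i) * (A.δ (cs.simple i) + ((T 1 - T (-1) : LaurentPolynomial ℤ)) • 1)) := by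
        rw [hX, mul_one]
    _ = (bar.bar (A.δ (cs.simple i)) * A.δ (cs.simple i)) * (A.δ (cs.simple i) + ((T 1 - T (-1) : LaurentPolynomial ℤ)) • 1) := by
        rw [mul_assoc]
    _ = _ := by rw [h1, one_mul]



/-- The span of the `δ_w` with `ℓ(w) < n`. -/
def lower (A : HeckeAlgebra cs H) (n : ℕ) : Submodule (LaurentPolynomial ℤ) H :=
  Submodule.span _ (A.δ '' {w | cs.length w < n})

lemma repr_eq_zero_of_mem_lower {A : HeckeAlgebra cs H} {n : ℕ} {h : H}
    (hm : h ∈ lower A n) {w : W} (hw : n ≤ cs.length w) : A.δ.repr h w = 0 := by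
  have hle : lower A n ≤ LinearMap.ker ((Finsupp.lapply w).comp
      (A.δ.repr : H →ₗ[LaurentPolynomial ℤ] (W →₀ LaurentPolynomial ℤ))) := by
    rw [lower, Submodule.span_le]
    rintro _ ⟨u, hu, rfl⟩
    simp only [SetLike.mem_coe, LinearMap.mem_ker, LinearMap.comp_apply,
      LinearEquiv.coe_coe, Finsupp.lapply_apply, A.δ.repr_self]
    rw [Finsupp.single_apply, if_neg]
    rintro rfl
    exact absurd hw (by simpa using hu)
  simpa using hle hm

lemma lower_mono {A : HeckeAlgebra cs H} {m n : ℕ} (hmn : m ≤ n) :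
    lower A m ≤ lower A n :=
  Submodule.span_mono (Set.image_mono fun w hw => lt_of_lt_of_le hw hmn)

lemma delta_mem_lower {A : HeckeAlgebra cs H} {w : W} {n : ℕ} (hw : cs.length w < n) :
    A.δ w ∈ lower A n :=
  Submodule.subset_span ⟨w, hw, rfl⟩

lemma simple_mul_mem_lower {A : HeckeAlgebra cs H} {n : ℕ} {h : H} (i : B)
    (hm : h ∈ lower A n) : A.δ (cs.simple i) * h ∈ lower A (n + 1) := by
  have hle : lower A n ≤ Submodule.comap
      (LinearMap.mulLeft (LaurentPolynomial ℤ) (A.δ (cs.simple i))) (lower A (n + 1)) := by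
    rw [lower, Submodule.span_le]
    rintro _ ⟨u, hu, rfl⟩
    simp only [SetLike.mem_coe, Submodule.mem_comap, LinearMap.mulLeft_apply]
    rw [simple_mul_delta]
    apply Submodule.add_mem
    · apply delta_mem_lower
      simp only [Set.mem_setOf_eq] at hu
      rcases cs.length_simple_mul u i with h' | h' <;> omega
    · split
      · exact Submodule.smul_mem _ _ (delta_mem_lower (by simp only [Set.mem_setOf_eq] at hu; omega))
      · exact Submodule.zero_mem _
  exact hle hm

lemma bar_delta_sub_mem (A : HeckeAlgebra cs H) (bar : BarInvolution A) (x : W) :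
    bar.bar (A.δ x) - A.δ x ∈ lower A (cs.length x) := by
  generalize hn : cs.length x = n
  induction n using Nat.strong_induction_on generalizing x with
  | _ n IH =>
    rcases eq_or_ne x 1 with rfl | hx1
    · rw [delta_one A bar, map_one, sub_self]; exact Submodule.zero_mem _
    · obtain ⟨i, hdesc⟩ := cs.exists_leftDescent_of_ne_one hx1
      set x' := cs.simple i * x with hx'
      have hsx' : cs.simple i * x' = x := by
        rw [hx', ← mul_assoc, cs.simple_mul_simple_self, one_mul]
      have hlen : cs.length x = cs.length x' + 1 := by
        rcases cs.length_simple_mul x i with h' | h'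
        · exact absurd h' (by have := hdesc; unfold CoxeterSystem.IsLeftDescent at this; omega)
        · rw [hx']; omega
      have hδ : A.δ x = A.δ (cs.simple i) * A.δ x' := by
        rw [(A.mul_of_length_add (cs.simple i) x' (by
          rw [cs.length_simple, hsx']; omega)), hsx']
      have hE := IH (cs.length x') (by omega) x' rfl
      set E := bar.bar (A.δ x') - A.δ x' with hEdef
      have hbarx' : bar.bar (A.δ x') = A.δ x' + E := by rw [hEdef]; abel
      have hbar : bar.bar (A.δ x) =
          A.δ (cs.simple i) * A.δ x' + (A.δ (cs.simple i) * E
            + ((T 1 - T (-1) : LaurentPolynomial ℤ) • A.δ x'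
              + (T 1 - T (-1) : LaurentPolynomial ℤ) • E)) := by
        rw [hδ, map_mul, bar_simple A bar i, hbarx']
        simp only [add_mul, mul_add, smul_mul_assoc, one_mul, smul_add]
        abel
      rw [hbar, hδ, ← hn]
      rw [add_sub_cancel_left]
      apply Submodule.add_mem
      · have := simple_mul_mem_lower i hE
        exact lower_mono (by omega) this
      · apply Submodule.add_mem
        · exact Submodule.smul_mem _ _ (delta_mem_lower (by omega))
        · exact Submodule.smul_mem _ _ (lower_mono (by omega) hE)

lemma eq_zero_of_bar_invariant (A : HeckeAlgebra cs H) (bar : BarInvolution A) {h : H}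
    (hbar : bar.bar h = h) (hmem : ∀ w : W, MemVZv (A.δ.repr h w)) : h = 0 := by
  by_contra hne
  set f := A.δ.repr h with hf
  have hfne : f ≠ 0 := fun h0 => hne (by
    have := A.δ.repr.map_eq_zero_iff.mp h0; exact this)
  have hsupp : f.support.Nonempty := Finsupp.support_nonempty_iff.mpr hfne
  obtain ⟨y, hyS, hymax⟩ := f.support.exists_max_image (fun w => cs.length w) hsupp
  have hrepr : h = ∑ w ∈ f.support, f w • A.δ w := by
    have := (A.δ.linearCombination_repr h).symm
    rwa [Finsupp.linearCombination_apply, Finsupp.sum] at this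
  have hbar2 : bar.bar h = ∑ w ∈ f.support, invert (f w) • bar.bar (A.δ w) := by
    conv_lhs => rw [hrepr]
    rw [map_sum]
    exact Finset.sum_congr rfl fun w _ => bar.bar_smul _ _
  have hval : A.δ.repr (bar.bar h) y = invert (f y) := by
    rw [hbar2, map_sum, Finsupp.finset_sum_apply]
    rw [Finset.sum_congr rfl (fun w hw => ?_), Finset.sum_ite_eq' f.support y
      (fun w => invert (f w)), if_pos hyS]
    rw [map_smul, Finsupp.smul_apply]
    have hlen : cs.length w ≤ cs.length y := hymax w hw
    have hrw : A.δ.repr (bar.bar (A.δ w)) y = A.δ.repr (A.δ w) y := by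
      have h0 : A.δ.repr (bar.bar (A.δ w) - A.δ w) y = 0 :=
        repr_eq_zero_of_mem_lower (bar_delta_sub_mem A bar w) hlen
      rw [map_sub, Finsupp.sub_apply] at h0
      exact sub_eq_zero.mp h0
    rw [hrw, A.δ.repr_self, Finsupp.single_apply]
    split <;> simp [smul_eq_mul]
  rw [hbar, ← hf] at hval
  -- hval : f y = invert (f y)
  have hyne : f y ≠ 0 := Finsupp.mem_support_iff.mp hyS
  obtain ⟨n, hn⟩ : ∃ n : ℤ, (f y).coeff n ≠ 0 := by
    by_contra hc
    push_neg at hc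
    exact hyne (LaurentPolynomial.ext fun a => by simpa using hc a)
  have hpos : 0 < n := by
    by_contra hc
    exact hn (hmem y n (by omega))
  have : (f y).coeff n = 0 := by
    conv_lhs => rw [hval]
    rw [invert_apply]
    exact hmem y (-n) (by omega)
  exact hn this





lemma repr_b_eq_zero_of_length_le (KL : KLBasis A bar) {x y : W}
    (hlen : cs.length x ≤ cs.length y) (hne : y ≠ x) : A.δ.repr (KL.b x) y = 0 := by
  by_contra hc
  exact absurd ((KL.repr_lt x y hne hc).length_lt) (by omega)

-- coefficient lemmas for Laurent polynomials
lemma one_apply_laurent (n : ℤ) : (1 : LaurentPolynomial ℤ).coeff n = if n = 0 then 1 else 0 := by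
  rw [← T_zero, LaurentPolynomial.T_apply]
  simp [eq_comm]

lemma T_apply (k n : ℤ) : (T k : LaurentPolynomial ℤ).coeff n = if k = n then 1 else 0 := by
  exact LaurentPolynomial.T_apply n k

lemma T_mul_apply (k n : ℤ) (p : LaurentPolynomial ℤ) :
    ((T k : LaurentPolynomial ℤ) * p).coeff n = p.coeff (n - k) := by
  rw [show (T k : LaurentPolynomial ℤ) = AddMonoidAlgebra.single k 1 from rfl]
  rw [AddMonoidAlgebra.coeff_single_mul_apply]
  rw [one_mul]; ring_nf

lemma b_simple (KL : KLBasis A bar) (i : B) :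
    KL.b (cs.simple i) = A.δ (cs.simple i) + (T 1 : LaurentPolynomial ℤ) • 1 := by
  have hs1 : (1 : W) ≠ cs.simple i := by
    intro hc
    have := cs.length_simple i
    rw [← hc, cs.length_one] at this
    omega
  set q := A.δ.repr (KL.b (cs.simple i)) 1 with hq
  have hform : KL.b (cs.simple i) = A.δ (cs.simple i) + q • 1 := by
    apply A.δ.repr.injective
    refine Finsupp.ext fun w => ?_
    rw [map_add, map_smul, Finsupp.add_apply, Finsupp.smul_apply, A.δ.repr_self,
      ← delta_one A bar, A.δ.repr_self]
    rcases eq_or_ne w (cs.simple i) with rfl | hws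
    · rw [KL.repr_self, Finsupp.single_apply, if_pos rfl, Finsupp.single_apply,
        if_neg (by exact hs1), smul_eq_mul, mul_zero, add_zero]
    · rcases eq_or_ne w 1 with rfl | hw1
      · rw [← hq, Finsupp.single_apply, if_neg (fun hc => hs1 hc.symm),
          Finsupp.single_apply, if_pos rfl, smul_eq_mul, mul_one, zero_add]
      · rw [Finsupp.single_apply, if_neg (fun hc => hws hc.symm),
          Finsupp.single_apply, if_neg (fun hc => hw1 hc.symm), smul_eq_mul, mul_zero,
          add_zero]
        by_contra hc
        have hlt := KL.repr_lt (cs.simple i) w hws hc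
        have := hlt.length_lt
        rw [cs.length_simple] at this
        have h0 : cs.length w = 0 := by omega
        exact hw1 (cs.length_eq_zero_iff.mp h0)
  suffices hqT : q = T 1 by rw [hform, hqT]
  -- use self-duality
  have hsd := KL.selfDual (cs.simple i)
  rw [hform, map_add, bar_simple A bar i, bar.bar_smul, map_one] at hsd
  -- hsd : δ s + (T1 - T(-1))•1 + invert q • 1 = δ s + q • 1
  have hsd2 : ((T 1 - T (-1) : LaurentPolynomial ℤ) + invert q) • (1 : H) = q • 1 := by
    rw [add_smul]
    calc (T 1 - T (-1) : LaurentPolynomial ℤ) • (1:H) + invert q • 1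
        = (A.δ (cs.simple i) + ((T 1 - T (-1) : LaurentPolynomial ℤ)) • 1 + invert q • 1)
          - A.δ (cs.simple i) := by abel
      _ = (A.δ (cs.simple i) + q • 1) - A.δ (cs.simple i) := by rw [hsd]
      _ = q • 1 := by abel
  have hpq : (T 1 - T (-1) : LaurentPolynomial ℤ) + invert q = q := by
    have := congrArg (fun z => A.δ.repr z 1) hsd2
    simp only [map_smul, Finsupp.smul_apply, ← delta_one A bar, A.δ.repr_self,
      Finsupp.single_apply, smul_eq_mul] at this
    simpa using this
  have hmem : MemVZv q := KL.repr_mem (cs.simple i) 1 hs1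
  ext n
  rcases le_or_gt n 0 with hn | hn
  · rw [hmem n hn, T_apply, if_neg (by omega)]
  · have h1 : q.coeff n = (T 1 - T (-1) : LaurentPolynomial ℤ).coeff n + q.coeff (-n) := by
      conv_lhs => rw [← hpq]
      rw [AddMonoidAlgebra.coeff_add, Finsupp.add_apply, invert_apply]
    rw [h1, hmem (-n) (by omega), add_zero, AddMonoidAlgebra.coeff_sub, Finsupp.sub_apply, T_apply, T_apply]
    simp [show (-1 : ℤ) ≠ n by omega]




lemma MemVZv.add' {p q : LaurentPolynomial ℤ} (hp : MemVZv p) (hq : MemVZv q) :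
    MemVZv (p + q) := fun n hn => by
  rw [AddMonoidAlgebra.coeff_add, Finsupp.add_apply, hp n hn, hq n hn, add_zero]

lemma MemVZv.sub' {p q : LaurentPolynomial ℤ} (hp : MemVZv p) (hq : MemVZv q) :
    MemVZv (p - q) := fun n hn => by
  rw [AddMonoidAlgebra.coeff_sub, Finsupp.sub_apply, hp n hn, hq n hn, sub_zero]

lemma MemVZv.zero' : MemVZv (0 : LaurentPolynomial ℤ) := fun _ _ => rfl

lemma MemVZv.zsmul' (z : ℤ) {p : LaurentPolynomial ℤ} (hp : MemVZv p) :
    MemVZv (z • p) := fun n hn => by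
  rw [AddMonoidAlgebra.coeff_smul, Finsupp.smul_apply, hp n hn, smul_zero]

lemma MemVZv.finsetSum {ι : Type*} (s : Finset ι) (g : ι → LaurentPolynomial ℤ)
    (h : ∀ y ∈ s, MemVZv (g y)) : MemVZv (∑ y ∈ s, g y) := fun n hn => by
  rw [AddMonoidAlgebra.coeff_sum, Finsupp.finset_sum_apply]
  exact Finset.sum_eq_zero fun y hy => h y hy n hn


/-- If `x < xs` then `b_x · b_s = b_{xs} + Σ_{y : ys < y} μ(y,x) · b_y`. -/
theorem klBasis_mul_simple_of_lt
    {B W : Type} [Group W] {M : CoxeterMatrix B} (cs : CoxeterSystem M W)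
    {H : Type} [Ring H] [Algebra (LaurentPolynomial ℤ) H]
    (A : HeckeAlgebra cs H) (bar : BarInvolution A) (KL : KLBasis A bar)
    (x : W) (i : B) (hx : BruhatLT cs x (x * cs.simple i)) :
    KL.b x * KL.b (cs.simple i) =
      KL.b (x * cs.simple i) +
        ∑ᶠ (y : W) (_ : BruhatLT cs (y * cs.simple i) y), KL.mu y x • KL.b y := by
  set s := cs.simple i with hs_def
  set f := A.δ.repr (KL.b x) with hf
  set S := f.support with hS
  have hxlen : cs.length x < cs.length (x * s) := hx.length_lt
  have hfx : f x = 1 := KL.repr_self x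
  have hcancel : ∀ w : W, w * s * s = w := fun w => by
    rw [hs_def, mul_assoc, cs.simple_mul_simple_self, mul_one]
  have hxs_ne : x * s ≠ x := fun hc => by rw [hc] at hxlen; omega
  have hfxs : f (x * s) = 0 :=
    repr_b_eq_zero_of_length_le KL (le_of_lt hxlen) hxs_ne
  have hSlen : ∀ y ∈ S, cs.length y ≤ cs.length x := by
    intro y hy
    have hne := Finsupp.mem_support_iff.mp hy
    rcases eq_or_ne y x with rfl | hyx
    · exact le_refl _
    · exact le_of_lt (KL.repr_lt x y hyx hne).length_lt
  have hfnn : ∀ w : W, ∀ n : ℤ, n < 0 → (f w).coeff n = 0 := by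
    intro w n hn
    rcases eq_or_ne w x with rfl | hwx
    · rw [hfx, one_apply_laurent, if_neg (by omega)]
    · exact KL.repr_mem x w hwx n (by omega)
  have hrepr : KL.b x = ∑ y ∈ S, f y • A.δ y := by
    have := (A.δ.linearCombination_repr (KL.b x)).symm
    rwa [Finsupp.linearCombination_apply, Finsupp.sum] at this
  have hbs := b_simple KL i
  have exp1 : KL.b x * KL.b s = ∑ y ∈ S, f y •
      (A.δ (y * s) + ((T 1 : LaurentPolynomial ℤ)) • A.δ y +
        (if cs.length (y * s) < cs.length y then
          ((T (-1) - T 1 : LaurentPolynomial ℤ)) • A.δ y else 0)) := by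
    conv_lhs => rw [hrepr]
    rw [hbs, Finset.sum_mul]
    refine Finset.sum_congr rfl fun y _ => ?_
    rw [smul_mul_assoc, mul_add, mul_smul_comm, mul_one, delta_mul_simple A y i]
    rw [add_right_comm]
  have repr_prod : ∀ w : W, A.δ.repr (KL.b x * KL.b s) w =
      f (w * s) + ((T 1 : LaurentPolynomial ℤ) * f w +
        (if cs.length (w * s) < cs.length w then
          (T (-1) - T 1 : LaurentPolynomial ℤ) * f w else 0)) := by
    intro w
    have hws_ne : ∀ y : W, y * s ≠ y := by
      intro y hc
      have := cs.length_mul_simple_ne y i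
      rw [← hs_def, hc] at this
      exact this rfl
    have inner : ∀ y : W, A.δ.repr (f y •
        (A.δ (y * s) + ((T 1 : LaurentPolynomial ℤ)) • A.δ y +
          (if cs.length (y * s) < cs.length y then
            ((T (-1) - T 1 : LaurentPolynomial ℤ)) • A.δ y else 0))) w =
        (if y = w * s then f y else 0) +
          (if y = w then (T 1 : LaurentPolynomial ℤ) * f w +
            (if cs.length (w * s) < cs.length w then
              (T (-1) - T 1 : LaurentPolynomial ℤ) * f w else 0) else 0) := by
      intro y
      rw [map_smul, Finsupp.smul_apply, map_add, map_add, Finsupp.add_apply,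
        Finsupp.add_apply, map_smul, Finsupp.smul_apply, A.δ.repr_self, A.δ.repr_self,
        apply_ite (A.δ.repr), map_zero, map_smul,
        apply_ite (fun p : W →₀ LaurentPolynomial ℤ => p w), Finsupp.smul_apply,
        Finsupp.zero_apply, A.δ.repr_self, Finsupp.single_apply, Finsupp.single_apply]
      rcases eq_or_ne y w with rfl | hyw
      · rw [if_neg (hws_ne y), if_pos rfl, if_pos rfl,
          if_neg (fun hc : y = y * s => hws_ne y hc.symm)]
        simp only [smul_eq_mul]
        split_ifs <;> ring
      · rcases eq_or_ne y (w * s) with rfl | hyws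
        · rw [if_pos (hcancel w), if_pos rfl, if_neg hyw, if_neg hyw]
          simp only [smul_eq_mul]
          split_ifs <;> ring
        · rw [if_neg (fun hc : y * s = w => hyws (by rw [← hc, hcancel])),
            if_neg hyw, if_neg hyws, if_neg hyw]
          simp only [smul_eq_mul]
          split_ifs <;> ring
    rw [exp1, map_sum, Finsupp.finset_sum_apply,
      Finset.sum_congr rfl (fun y _ => inner y), Finset.sum_add_distrib,
      Finset.sum_ite_eq' S (w * s) (fun y => f y),
      Finset.sum_ite_eq' S w (fun _ => (T 1 : LaurentPolynomial ℤ) * f w +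
        (if cs.length (w * s) < cs.length w then
          (T (-1) - T 1 : LaurentPolynomial ℤ) * f w else 0))]
    congr 1
    · split_ifs with hmem
      · rfl
      · rw [Finsupp.notMem_support_iff.mp hmem]
    · split_ifs with hmem h2 h3
      · rfl
      · rfl
      · rw [Finsupp.notMem_support_iff.mp hmem]; ring
      · rw [Finsupp.notMem_support_iff.mp hmem]; ring
  have hmu : ∀ y, KL.mu y x = (f y).coeff 1 := fun y => rfl
  set Sum := ∑ y ∈ S, (if BruhatLT cs (y * s) y then KL.mu y x • KL.b y else 0)
    with hSum
  have hfin : (∑ᶠ (y : W) (_ : BruhatLT cs (y * s) y), KL.mu y x • KL.b y) = Sum := by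
    rw [finsum_congr (fun y => (finsum_eq_if (p := BruhatLT cs (y * s) y)))]
    apply finsum_eq_finset_sum_of_support_subset
    intro y hy
    simp only [Function.mem_support] at hy
    by_contra hyS
    apply hy
    have hf0 : f y = 0 := Finsupp.notMem_support_iff.mp hyS
    have : KL.mu y x = 0 := by rw [hmu, hf0]; rfl
    rw [this]
    split <;> simp
  set E := KL.b x * KL.b s - (KL.b (x * s) + Sum) with hE
  suffices hE0 : E = 0 by
    rw [hfin]
    exact sub_eq_zero.mp hE0
  apply eq_zero_of_bar_invariant A bar
  · rw [hE, map_sub, map_add, map_mul, KL.selfDual, KL.selfDual, KL.selfDual]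
    have hbarSum : bar.bar Sum = Sum := by
      rw [hSum, map_sum]
      refine Finset.sum_congr rfl fun y _ => ?_
      rw [apply_ite bar.bar, map_zero, map_zsmul, KL.selfDual]
    rw [hbarSum]
  · intro w
    have hreprE : A.δ.repr E w =
        (f (w * s) + ((T 1 : LaurentPolynomial ℤ) * f w +
          (if cs.length (w * s) < cs.length w then
            (T (-1) - T 1 : LaurentPolynomial ℤ) * f w else 0)))
        - (A.δ.repr (KL.b (x * s)) w +
           ∑ y ∈ S, (if BruhatLT cs (y * s) y then
             KL.mu y x • (A.δ.repr (KL.b y) w) else 0)) := by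
      rw [hE, map_sub, map_add, Finsupp.sub_apply, Finsupp.add_apply, repr_prod w,
        hSum, map_sum, Finsupp.finset_sum_apply]
      congr 2
      refine Finset.sum_congr rfl fun y _ => ?_
      rw [apply_ite (A.δ.repr), map_zero, map_zsmul,
        apply_ite (fun p : W →₀ LaurentPolynomial ℤ => p w), Finsupp.smul_apply,
        Finsupp.zero_apply]
    rw [hreprE]
    rcases eq_or_ne w (x * s) with rfl | hw
    · -- w = x * s : everything cancels
      have hz : (f (x * s * s) + ((T 1 : LaurentPolynomial ℤ) * f (x * s) +
          (if cs.length (x * s * s) < cs.length (x * s) then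
            (T (-1) - T 1 : LaurentPolynomial ℤ) * f (x * s) else 0)))
          - (A.δ.repr (KL.b (x * s)) (x * s) +
             ∑ y ∈ S, (if BruhatLT cs (y * s) y then
               KL.mu y x • (A.δ.repr (KL.b y) (x * s)) else 0)) = 0 := by
        rw [hcancel x, hfx, hfxs, KL.repr_self]
        have hsum0 : ∑ y ∈ S, (if BruhatLT cs (y * s) y then
            KL.mu y x • (A.δ.repr (KL.b y) (x * s)) else 0) = 0 := by
          refine Finset.sum_eq_zero fun y hy => ?_
          have h1 : A.δ.repr (KL.b y) (x * s) = 0 := by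
            apply repr_b_eq_zero_of_length_le KL
            · exact le_of_lt (lt_of_le_of_lt (hSlen y hy) hxlen)
            · intro hc
              have := hSlen y hy
              rw [← hc] at this
              omega
          rw [h1]
          split <;> simp
        rw [hsum0]
        split_ifs <;> ring
      rw [hz]
      exact MemVZv.zero'
    · -- w ≠ x * s
      have hwsx : w * s ≠ x := fun hc => hw (by rw [← hc, hcancel])
      have hfws : MemVZv (f (w * s)) := KL.repr_mem x (w * s) hwsx
      have hhw : MemVZv (A.δ.repr (KL.b (x * s)) w) := KL.repr_mem (x * s) w hw
      set t := fun y : W => (if BruhatLT cs (y * s) y then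
        KL.mu y x • (A.δ.repr (KL.b y) w) else 0) with ht
      have htw : t w = (if cs.length (w * s) < cs.length w then
          (KL.mu w x : ℤ) • (1 : LaurentPolynomial ℤ) else 0) := by
        rw [ht]
        simp only
        rw [KL.repr_self w]
        split_ifs with h1 h2 h2
        · rfl
        · exact absurd ((bruhatLT_mul_simple_iff w i).mp h1) h2
        · exact absurd ((bruhatLT_mul_simple_iff w i).mpr h2) h1
        · rfl
      have hsplit : ∑ y ∈ S, t y = t w + ∑ y ∈ S.erase w, t y := by
        rcases Finset.decidableMem w S with hmem | hmem
        · -- w ∉ S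
          rw [Finset.erase_eq_of_notMem hmem]
          have hf0 : f w = 0 := Finsupp.notMem_support_iff.mp hmem
          have : t w = 0 := by
            rw [htw]
            have : KL.mu w x = 0 := by rw [hmu, hf0]; rfl
            rw [this]
            split <;> simp
          rw [this, zero_add]
        · exact (Finset.add_sum_erase S t hmem).symm
      have hrest : MemVZv (∑ y ∈ S.erase w, t y) := by
        apply MemVZv.finsetSum
        intro y hy
        have hyw : y ≠ w := (Finset.mem_erase.mp hy).1
        rw [ht]
        simp only
        split
        · exact MemVZv.zsmul' _ (KL.repr_mem y w (fun hc => hyw hc.symm))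
        · exact MemVZv.zero'
      have hcore : MemVZv (((T 1 : LaurentPolynomial ℤ) * f w +
          (if cs.length (w * s) < cs.length w then
            (T (-1) - T 1 : LaurentPolynomial ℤ) * f w else 0)) - t w) := by
        rw [htw]
        by_cases hlt : cs.length (w * s) < cs.length w
        · rw [if_pos hlt, if_pos hlt]
          have hwx : w ≠ x := by
            intro hc
            rw [hc] at hlt
            omega
          have hp : MemVZv (f w) := KL.repr_mem x w hwx
          intro n hn
          rw [AddMonoidAlgebra.coeff_sub, Finsupp.sub_apply, AddMonoidAlgebra.coeff_add,
            Finsupp.add_apply, T_mul_apply, sub_mul, AddMonoidAlgebra.coeff_sub,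
            Finsupp.sub_apply, T_mul_apply, T_mul_apply, AddMonoidAlgebra.coeff_smul,
            Finsupp.smul_apply,
            one_apply_laurent, hmu]
          rcases eq_or_lt_of_le hn with rfl | hn0
          · rw [if_pos rfl, hp (0 - 1) (by omega), show (0 : ℤ) - -1 = 1 by ring]
            simp [smul_eq_mul]
          · rw [if_neg (by omega), hp (n - 1) (by omega), hp (n - -1) (by omega)]
            simp
        · rw [if_neg hlt, if_neg hlt]
          intro n hn
          rw [sub_zero, add_zero, T_mul_apply]
          exact hfnn w (n - 1) (by omega)
      have hX : (f (w * s) + ((T 1 : LaurentPolynomial ℤ) * f w +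
          (if cs.length (w * s) < cs.length w then
            (T (-1) - T 1 : LaurentPolynomial ℤ) * f w else 0)))
          - (A.δ.repr (KL.b (x * s)) w + ∑ y ∈ S, t y) =
          f (w * s) + (((T 1 : LaurentPolynomial ℤ) * f w +
            (if cs.length (w * s) < cs.length w then
              (T (-1) - T 1 : LaurentPolynomial ℤ) * f w else 0)) - t w)
          - A.δ.repr (KL.b (x * s)) w - ∑ y ∈ S.erase w, t y := by
        rw [hsplit]; ring
      rw [hX]
      exact ((hfws.add' hcore).sub' hhw).sub' hrest

end KLMonotonicity
end
end

section
/- Let (W,S) be the Coxeter system of type A_2, i.e. W is the symmetric group S_3 with simple reflections S = {s_1, s_2}, and let I = {s_1}. Then the minimal length coset representatives are ᴵW = {e, s_2, s_2s_1}, the induced Bruhat order on ᴵW is the chain e < s_2 < s_2s_1, and the spherical inverse Kazhdan–Lusztig polynomials satisfy m^{e,s_2} = v and m^{e,s_2s_1} = 0; in particular the monotonicity inequality m^{e,s_2} ⪯ v^{ℓ(s_2s_1)−ℓ(s_2)} · m^{e,s_2s_1} fails, so spherical inverse Kazhdan–Lusztig polynomials do not satisfy the monotonicity property. -/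
/-!  Setup: the Hecke algebra of an arbitrary Coxeter system, its bar involution,
its Kazhdan–Lusztig basis, and (inverse) Kazhdan–Lusztig polynomials.  -/

noncomputable section

open LaurentPolynomial

namespace KLMonotonicity

variable {B W : Type} [Group W] {M : CoxeterMatrix B}

variable {cs : CoxeterSystem M W} {H : Type} [Ring H] [Algebra (LaurentPolynomial ℤ) H]

/-!  Setup: the spherical module of a Coxeter system with respect to a subset
`I` of the simple reflections, its standard basis, induced bar involution,
spherical Kazhdan–Lusztig basis and inverse polynomials. -/

/-- `x` is the minimal length representative of its coset `W_I x`. -/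
def IsMinimalRep (cs : CoxeterSystem M W) (I : Set B) (x : W) : Prop :=
  ∀ w ∈ Subgroup.closure (cs.simple '' I), cs.length x ≤ cs.length (w * x)

/-- The data of (a realisation of) the spherical right `H`-module
`ᴵM = Ind_{H_I}^H triv^I` on a `ℤ[v,v⁻¹]`-module `N`: the standard basis
`{δ^I_x | x ∈ ᴵW}` indexed by the minimal length coset representatives,
together with the right action of each `δ_s` (`s ∈ S`), which is uniquely
determined:  `δ^I_x · δ_s = δ^I_{xs}` if `xs ∈ ᴵW`, `x < xs`;
`δ^I_x · δ_s = δ^I_{xs} + (v⁻¹ - v)·δ^I_x` if `xs ∈ ᴵW`, `xs < x`; and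
`δ^I_x · δ_s = v⁻¹·δ^I_x` if `xs ∉ ᴵW` (since then `δ^I_x · δ_s = triv^I(δ_u)·δ^I_x`
for a simple reflection `u ∈ W_I`).  These formulas characterise `ᴵM`. -/
structure SphericalModule (cs : CoxeterSystem M W) (I : Set B) (N : Type)
    [AddCommGroup N] [Module (LaurentPolynomial ℤ) N] where
  /-- the standard basis `{δ^I_x | x ∈ ᴵW}` -/
  δI : Module.Basis {x : W // IsMinimalRep cs I x} (LaurentPolynomial ℤ) N
  /-- the right action of the standard generator `δ_{s_i}` of `H` -/
  act : B → N →ₗ[LaurentPolynomial ℤ] N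
  act_up : ∀ (i : B) (x : {x : W // IsMinimalRep cs I x})
      (h : IsMinimalRep cs I (x.1 * cs.simple i)),
      cs.length x.1 < cs.length (x.1 * cs.simple i) →
      act i (δI x) = δI ⟨x.1 * cs.simple i, h⟩
  act_down : ∀ (i : B) (x : {x : W // IsMinimalRep cs I x})
      (h : IsMinimalRep cs I (x.1 * cs.simple i)),
      cs.length (x.1 * cs.simple i) < cs.length x.1 →
      act i (δI x) = δI ⟨x.1 * cs.simple i, h⟩ + ((T (-1) - T 1 : LaurentPolynomial ℤ)) • δI x
  act_notRep : ∀ (i : B) (x : {x : W // IsMinimalRep cs I x}),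
      ¬ IsMinimalRep cs I (x.1 * cs.simple i) →
      act i (δI x) = ((T (-1) : LaurentPolynomial ℤ)) • δI x

/-- The involution of the spherical module induced by the bar involution of `H`:
it is semilinear over `v ↦ v⁻¹`, fixes `δ^I_1 = 1 ⊗ δ_1`, and satisfies
`bar(n · δ_s) = bar(n) · bar(δ_s) = bar(n) · (δ_s + (v - v⁻¹))`.  These
conditions determine it uniquely. -/
structure SphericalBar {cs : CoxeterSystem M W} {I : Set B} {N : Type}
    [AddCommGroup N] [Module (LaurentPolynomial ℤ) N]
    (SM : SphericalModule cs I N) where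
  bar : N ≃+ N
  bar_bar : ∀ n : N, bar (bar n) = n
  bar_smul : ∀ (p : LaurentPolynomial ℤ) (n : N), bar (p • n) = (invert p) • bar n
  bar_act : ∀ (i : B) (n : N),
    bar (SM.act i n) = SM.act i (bar n) + ((T 1 - T (-1) : LaurentPolynomial ℤ)) • bar n
  bar_one : ∀ h : IsMinimalRep cs I 1, bar (SM.δI ⟨1, h⟩) = SM.δI ⟨1, h⟩

/-- The data of the spherical Kazhdan–Lusztig basis `{c_x | x ∈ ᴵW}`: it is
bar-invariant and `c_x ∈ δ^I_x + Σ_{y < x} v ℤ[v] · δ^I_y`.  These conditions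
determine `c` uniquely. -/
structure SKLBasis {cs : CoxeterSystem M W} {I : Set B} {N : Type}
    [AddCommGroup N] [Module (LaurentPolynomial ℤ) N]
    (SM : SphericalModule cs I N) (bar : SphericalBar SM) where
  c : {x : W // IsMinimalRep cs I x} → N
  selfDual : ∀ x, bar.bar (c x) = c x
  repr_self : ∀ x, SM.δI.repr (c x) x = 1
  repr_lt : ∀ x y, y ≠ x → SM.δI.repr (c x) y ≠ 0 → BruhatLT cs y.1 x.1
  repr_mem : ∀ x y, y ≠ x → MemVZv (SM.δI.repr (c x) y)

/-- `minv` is the family of spherical inverse Kazhdan–Lusztig polynomials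
`m^{y,x}`, i.e. `δ^I_x = Σ_y (-1)^{ℓ(x) - ℓ(y)} m^{y,x} c_y`
(note `(-1)^{ℓ(x) - ℓ(y)} = (-1)^{ℓ(x) + ℓ(y)}`), the sum being finite. -/
def IsInverseSKL {cs : CoxeterSystem M W} {I : Set B} {N : Type}
    [AddCommGroup N] [Module (LaurentPolynomial ℤ) N]
    (SM : SphericalModule cs I N)
    (c : {x : W // IsMinimalRep cs I x} → N)
    (minv : {x : W // IsMinimalRep cs I x} → {x : W // IsMinimalRep cs I x} →
      LaurentPolynomial ℤ) : Prop :=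
  ∀ x, (Function.support fun y => minv y x).Finite ∧
    SM.δI x = ∑ᶠ y,
      (((-1 : LaurentPolynomial ℤ) ^ (cs.length x.1 + cs.length y.1)) * minv y x) • c y


/-! ### Auxiliary lemmas -/

lemma aux_length_lt_of_bruhatLT {cs : CoxeterSystem M W} {a b : W} (h : BruhatLT cs a b) :
    cs.length a < cs.length b := by
  obtain ⟨hle, hne⟩ := h
  rcases (Relation.reflTransGen_iff_eq_or_transGen.mp hle) with h | htg
  · exact absurd h.symm hne
  · clear hne hle
    induction htg with
    | single h => exact h.2
    | tail _ h2 ih => exact lt_trans ih h2.2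

lemma aux_eq_T_of_skew (p : LaurentPolynomial ℤ) (k : ℤ) (hk : 0 < k) (hp : MemVZv p)
    (h : p - invert p = T k - T (-k)) : p = T k := by
  ext n
  have hn : p.coeff n - p.coeff (-n) = (T k : LaurentPolynomial ℤ).coeff n - (T (-k) : LaurentPolynomial ℤ).coeff n :=
    by rw [← invert_apply]; exact congrArg (fun q : LaurentPolynomial ℤ => q.coeff n) h
  rcases le_or_gt n 0 with h1 | h1
  · rw [hp n h1, T_apply, if_neg (by omega)]
  · have hk' : (T (-k) : LaurentPolynomial ℤ).coeff n = 0 := by rw [T_apply, if_neg (by omega)]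
    rw [hp (-n) (by omega), sub_zero, hk', sub_zero] at hn
    rw [hn]

private def aux_f3 : Fin 2 → Equiv.Perm (Fin 3) := ![Equiv.swap 0 1, Equiv.swap 1 2]

lemma aux_liftable : CoxeterMatrix.IsLiftable (CoxeterMatrix.Aₙ 2) aux_f3 := by
  unfold CoxeterMatrix.IsLiftable aux_f3; decide

section Aux

variable {W : Type} [Group W] (cs : CoxeterSystem (CoxeterMatrix.Aₙ 2) W)

lemma aux_phi_simple (i : Fin 2) : cs.lift ⟨aux_f3, aux_liftable⟩ (cs.simple i) = aux_f3 i :=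
  cs.lift_apply_simple aux_liftable i

lemma aux_simple_ne : cs.simple 0 ≠ cs.simple 1 := by
  intro h
  have := congrArg (cs.lift ⟨aux_f3, aux_liftable⟩) h
  rw [aux_phi_simple, aux_phi_simple] at this
  exact absurd this (by decide)

lemma aux_braid :
    cs.simple 0 * cs.simple 1 * cs.simple 0 = cs.simple 1 * cs.simple 0 * cs.simple 1 := by
  have hbr := cs.simple_mul_simple_pow 0 1
  have hM : (CoxeterMatrix.Aₙ 2) 0 1 = 3 := by decide
  rw [hM, pow_three] at hbr
  have h6 : cs.simple 0 * cs.simple 1 * cs.simple 0 *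
      (cs.simple 1 * cs.simple 0 * cs.simple 1) = 1 := by
    simpa only [mul_assoc] using hbr
  have h6' : cs.simple 1 * cs.simple 0 * cs.simple 1 *
      (cs.simple 1 * cs.simple 0 * cs.simple 1) = 1 := by
    simp only [mul_assoc, cs.simple_mul_simple_cancel_left, cs.simple_mul_simple_self]
  exact mul_right_cancel (h6.trans h6'.symm)

lemma aux_len_ab : cs.length (cs.simple 0 * cs.simple 1) = 2 := by
  rcases cs.length_mul_simple (cs.simple 0) 1 with h | h
  · rw [h, cs.length_simple]
  · exfalso
    rw [cs.length_simple] at h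
    have h0 : cs.length (cs.simple 0 * cs.simple 1) = 0 := by omega
    have h1 := cs.length_eq_zero_iff.mp h0
    have : cs.simple 0 = (cs.simple 1)⁻¹ := by rw [eq_inv_iff_mul_eq_one]; exact h1
    rw [cs.inv_simple] at this
    exact aux_simple_ne cs this

lemma aux_len_ba : cs.length (cs.simple 1 * cs.simple 0) = 2 := by
  rcases cs.length_mul_simple (cs.simple 1) 0 with h | h
  · rw [h, cs.length_simple]
  · exfalso
    rw [cs.length_simple] at h
    have h0 : cs.length (cs.simple 1 * cs.simple 0) = 0 := by omega
    have h1 := cs.length_eq_zero_iff.mp h0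
    have : cs.simple 1 = (cs.simple 0)⁻¹ := by rw [eq_inv_iff_mul_eq_one]; exact h1
    rw [cs.inv_simple] at this
    exact aux_simple_ne cs this.symm

lemma aux_len_aba : cs.length (cs.simple 0 * cs.simple 1 * cs.simple 0) = 3 := by
  rcases cs.length_mul_simple (cs.simple 0 * cs.simple 1) 0 with h | h
  · rw [h, aux_len_ab]
  · exfalso
    rw [aux_len_ab] at h
    have h1 : cs.length (cs.simple 0 * cs.simple 1 * cs.simple 0) = 1 := by omega
    obtain ⟨i, hi⟩ := cs.length_eq_one_iff.mp h1
    have h2 := congrArg (cs.lift ⟨aux_f3, aux_liftable⟩) hi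
    simp only [map_mul, aux_phi_simple] at h2
    have : i = 0 ∨ i = 1 := by omega
    rcases this with rfl | rfl <;> exact absurd h2 (by decide)

lemma aux_mem_six (x : W) : x = 1 ∨ x = cs.simple 0 ∨ x = cs.simple 1 ∨
    x = cs.simple 0 * cs.simple 1 ∨ x = cs.simple 1 * cs.simple 0 ∨
    x = cs.simple 0 * cs.simple 1 * cs.simple 0 := by
  induction x using cs.simple_induction_left with
  | one => exact Or.inl rfl
  | mul_simple_left w i ih =>
    have hi : i = 0 ∨ i = 1 := by omega
    rcases hi with rfl | rfl
    · rcases ih with rfl | rfl | rfl | rfl | rfl | rfl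
      · right; left; rw [mul_one]
      · left; exact cs.simple_mul_simple_self 0
      · right; right; right; left; rfl
      · right; right; left; exact cs.simple_mul_simple_cancel_left 0
      · right; right; right; right; right; rw [← mul_assoc]
      · right; right; right; right; left
        rw [mul_assoc (cs.simple 0) (cs.simple 1) (cs.simple 0)]
        exact cs.simple_mul_simple_cancel_left 0
    · rcases ih with rfl | rfl | rfl | rfl | rfl | rfl
      · right; right; left; rw [mul_one]
      · right; right; right; right; left; rfl
      · left; exact cs.simple_mul_simple_self 1
      · right; right; right; right; right
        rw [← mul_assoc, ← aux_braid cs]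
      · right; left; exact cs.simple_mul_simple_cancel_left 1
      · right; right; right; left
        rw [aux_braid cs, mul_assoc (cs.simple 1) (cs.simple 0) (cs.simple 1)]
        exact cs.simple_mul_simple_cancel_left 1

end Aux

/-- **Failure of monotonicity for spherical inverse Kazhdan–Lusztig
polynomials** in type `A₂` with `I = {s₁}`:  the minimal length coset
representatives are `ᴵW = {e, s₂, s₂s₁}`, the induced Bruhat order on `ᴵW` is
the chain `e < s₂ < s₂s₁`, and `m^{e,s₂} = v`, `m^{e,s₂s₁} = 0`; in particular
`m^{e,s₂} ⪯ v^{ℓ(s₂s₁)-ℓ(s₂)}·m^{e,s₂s₁}` fails. -/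
theorem spherical_inverse_kl_not_monotone
    {W : Type} [Group W] (cs : CoxeterSystem (CoxeterMatrix.Aₙ 2) W)
    {N : Type} [AddCommGroup N] [Module (LaurentPolynomial ℤ) N]
    (SM : SphericalModule cs ({0} : Set (Fin 2)) N) (barN : SphericalBar SM)
    (C : SKLBasis SM barN)
    (minv : {x : W // IsMinimalRep cs ({0} : Set (Fin 2)) x} →
      {x : W // IsMinimalRep cs ({0} : Set (Fin 2)) x} → LaurentPolynomial ℤ)
    (hIM : IsInverseSKL SM C.c minv)
    (he : IsMinimalRep cs ({0} : Set (Fin 2)) 1)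
    (hs2 : IsMinimalRep cs ({0} : Set (Fin 2)) (cs.simple 1))
    (hs21 : IsMinimalRep cs ({0} : Set (Fin 2)) (cs.simple 1 * cs.simple 0)) :
    {x : W | IsMinimalRep cs ({0} : Set (Fin 2)) x} =
        {1, cs.simple 1, cs.simple 1 * cs.simple 0} ∧
    BruhatLT cs 1 (cs.simple 1) ∧
    BruhatLT cs (cs.simple 1) (cs.simple 1 * cs.simple 0) ∧
    minv ⟨1, he⟩ ⟨cs.simple 1, hs2⟩ = T 1 ∧
    minv ⟨1, he⟩ ⟨cs.simple 1 * cs.simple 0, hs21⟩ = 0 ∧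
    ¬ CoeffLE (minv ⟨1, he⟩ ⟨cs.simple 1, hs2⟩)
        (T ((cs.length (cs.simple 1 * cs.simple 0) : ℤ) - (cs.length (cs.simple 1) : ℤ)) *
          minv ⟨1, he⟩ ⟨cs.simple 1 * cs.simple 0, hs21⟩) := by
  classical
  -- abbreviations
  have hne01 := aux_simple_ne cs
  have hl1 : cs.length (1 : W) = 0 := cs.length_one
  have hla : cs.length (cs.simple 0) = 1 := cs.length_simple 0
  have hlb : cs.length (cs.simple 1) = 1 := cs.length_simple 1
  have hlab : cs.length (cs.simple 0 * cs.simple 1) = 2 := aux_len_ab cs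
  have hlba : cs.length (cs.simple 1 * cs.simple 0) = 2 := aux_len_ba cs
  have hlaba : cs.length (cs.simple 0 * cs.simple 1 * cs.simple 0) = 3 := aux_len_aba cs
  -- distinctness
  have h1b : (1 : W) ≠ cs.simple 1 := fun h => by rw [← h, hl1] at hlb; exact one_ne_zero hlb.symm
  have h1ba : (1 : W) ≠ cs.simple 1 * cs.simple 0 := fun h => by
    rw [← h, hl1] at hlba; omega
  have hbba : cs.simple 1 ≠ cs.simple 1 * cs.simple 0 := fun h => by
    rw [← h, hlb] at hlba; omega
  -- a ∈ W_I
  have haI : cs.simple 0 ∈ Subgroup.closure (cs.simple '' ({0} : Set (Fin 2))) :=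
    Subgroup.subset_closure (Set.mem_image_of_mem _ rfl)
  -- non-minimal elements
  have hnma : ¬ IsMinimalRep cs ({0} : Set (Fin 2)) (cs.simple 0) := by
    intro h
    have := h _ haI
    rw [cs.simple_mul_simple_self 0, hl1, hla] at this
    omega
  have hnmab : ¬ IsMinimalRep cs ({0} : Set (Fin 2)) (cs.simple 0 * cs.simple 1) := by
    intro h
    have := h _ haI
    rw [cs.simple_mul_simple_cancel_left 0, hlb, hlab] at this
    omega
  have hnmaba : ¬ IsMinimalRep cs ({0} : Set (Fin 2)) (cs.simple 0 * cs.simple 1 * cs.simple 0) := by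
    intro h
    have := h _ haI
    have key : cs.simple 0 * (cs.simple 0 * cs.simple 1 * cs.simple 0) =
        cs.simple 1 * cs.simple 0 := by
      rw [mul_assoc (cs.simple 0) (cs.simple 1) (cs.simple 0)]
      exact cs.simple_mul_simple_cancel_left 0
    rw [key, hlba, hlaba] at this
    omega
  -- the set of minimal representatives
  have hSet : {x : W | IsMinimalRep cs ({0} : Set (Fin 2)) x} =
      {1, cs.simple 1, cs.simple 1 * cs.simple 0} := by
    ext x
    constructor
    · intro hx
      rcases aux_mem_six cs x with rfl | rfl | rfl | rfl | rfl | rfl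
      · exact Or.inl rfl
      · exact absurd hx hnma
      · exact Or.inr (Or.inl rfl)
      · exact absurd hx hnmab
      · exact Or.inr (Or.inr rfl)
      · exact absurd hx hnmaba
    · intro hx
      rcases hx with rfl | rfl | rfl
      · exact he
      · exact hs2
      · exact hs21
  -- Bruhat order facts
  have blt1 : BruhatLT cs 1 (cs.simple 1) := by
    refine ⟨Relation.ReflTransGen.single ⟨⟨cs.simple 1, cs.isReflection_simple 1,
      (one_mul _).symm⟩, ?_⟩, h1b⟩
    rw [hl1, hlb]; omega
  have blt2 : BruhatLT cs (cs.simple 1) (cs.simple 1 * cs.simple 0) := by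
    refine ⟨Relation.ReflTransGen.single ⟨⟨cs.simple 0, cs.isReflection_simple 0, rfl⟩, ?_⟩, hbba⟩
    rw [hlb, hlba]; omega
  refine ⟨hSet, blt1, blt2, ?_⟩
  -- subtype abbreviations
  set xe : {x : W // IsMinimalRep cs ({0} : Set (Fin 2)) x} := ⟨1, he⟩ with hxedef
  set xs : {x : W // IsMinimalRep cs ({0} : Set (Fin 2)) x} := ⟨cs.simple 1, hs2⟩ with hxsdef
  set xb : {x : W // IsMinimalRep cs ({0} : Set (Fin 2)) x} :=
    ⟨cs.simple 1 * cs.simple 0, hs21⟩ with hxbdef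
  have hes : xe ≠ xs := fun h => h1b (congrArg Subtype.val h)
  have heb : xe ≠ xb := fun h => h1ba (congrArg Subtype.val h)
  have hsb : xs ≠ xb := fun h => hbba (congrArg Subtype.val h)
  have hse : xs ≠ xe := hes.symm
  have hbe : xb ≠ xe := heb.symm
  have hbs : xb ≠ xs := hsb.symm
  -- lengths of the coset representatives
  have hlE : cs.length (xe.1) = 0 := hl1
  have hlS : cs.length (xs.1) = 1 := hlb
  have hlB : cs.length (xb.1) = 2 := hlba
  -- every minimal representative is one of the three
  have hall : ∀ x : {x : W // IsMinimalRep cs ({0} : Set (Fin 2)) x},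
      x = xe ∨ x = xs ∨ x = xb := by
    intro x
    have hx : x.1 ∈ {x : W | IsMinimalRep cs ({0} : Set (Fin 2)) x} := x.2
    rw [hSet] at hx
    rcases hx with h | h | h
    · exact Or.inl (Subtype.ext h)
    · exact Or.inr (Or.inl (Subtype.ext h))
    · exact Or.inr (Or.inr (Subtype.ext h))
  haveI : Fintype {x : W // IsMinimalRep cs ({0} : Set (Fin 2)) x} :=
    ⟨{xe, xs, xb}, fun x => by rcases hall x with rfl | rfl | rfl <;> simp⟩
  have hnm1 : xe ∉ ({xs, xb} : Finset {x : W // IsMinimalRep cs ({0} : Set (Fin 2)) x}) := by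
    simp [hes, heb]
  have hnm2 : xs ∉ ({xb} : Finset {x : W // IsMinimalRep cs ({0} : Set (Fin 2)) x}) := by
    simp [hsb]
  have huniv : (Finset.univ : Finset {x : W // IsMinimalRep cs ({0} : Set (Fin 2)) x}) =
      {xe, xs, xb} := by
    symm
    apply Finset.eq_univ_iff_forall.mpr
    intro x
    rcases hall x with rfl | rfl | rfl <;> simp
  -- expansion of an arbitrary element in the standard basis
  have expand : ∀ n : N, n = SM.δI.repr n xe • SM.δI xe +
      (SM.δI.repr n xs • SM.δI xs + SM.δI.repr n xb • SM.δI xb) := by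
    intro n
    have h0 := SM.δI.sum_repr n
    rw [show (Finset.univ : Finset {x : W // IsMinimalRep cs ({0} : Set (Fin 2)) x}) =
      {xe, xs, xb} from huniv] at h0
    rw [Finset.sum_insert hnm1, Finset.sum_insert hnm2, Finset.sum_singleton] at h0
    exact h0.symm
  -- action facts
  have hact1 : SM.act 1 (SM.δI xe) = SM.δI xs := by
    have hmin : IsMinimalRep cs ({0} : Set (Fin 2)) ((1 : W) * cs.simple 1) := by
      rw [one_mul]; exact hs2
    have hlen : cs.length ((1 : W)) < cs.length ((1 : W) * cs.simple 1) := by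
      rw [one_mul, hl1, hlb]; omega
    have h := SM.act_up 1 xe hmin hlen
    rw [h]
    exact congrArg SM.δI (Subtype.ext (one_mul _))
  have hact0s : SM.act 0 (SM.δI xs) = SM.δI xb := by
    have hmin : IsMinimalRep cs ({0} : Set (Fin 2)) (cs.simple 1 * cs.simple 0) := hs21
    have hlen : cs.length (cs.simple 1) < cs.length (cs.simple 1 * cs.simple 0) := by
      rw [hlb, hlba]; omega
    have h := SM.act_up 0 xs hmin hlen
    rw [h]
  have hact0e : SM.act 0 (SM.δI xe) = (T (-1) : LaurentPolynomial ℤ) • SM.δI xe := by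
    have hnot : ¬ IsMinimalRep cs ({0} : Set (Fin 2)) ((1 : W) * cs.simple 0) := by
      rw [one_mul]; exact hnma
    exact SM.act_notRep 0 xe hnot
  -- bar facts
  have hbare : barN.bar (SM.δI xe) = SM.δI xe := barN.bar_one he
  have hbars : barN.bar (SM.δI xs) = SM.δI xs +
      ((T 1 - T (-1) : LaurentPolynomial ℤ)) • SM.δI xe := by
    rw [← hact1, barN.bar_act, hbare, hact1]
  have hbarb : barN.bar (SM.δI xb) = SM.δI xb +
      ((T 1 - T (-1) : LaurentPolynomial ℤ)) • SM.δI xs +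
      (((T 1 - T (-1)) * T (-1) + (T 1 - T (-1)) * (T 1 - T (-1)) : LaurentPolynomial ℤ)) •
        SM.δI xe := by
    rw [← hact0s, barN.bar_act, hbars]
    rw [map_add, map_smul, hact0s, hact0e]
    module
  -- Laurent polynomial arithmetic
  have hT11 : (T 1 : LaurentPolynomial ℤ) * T 1 = T 2 := by rw [← T_add]; norm_num
  have hT1m1 : (T 1 : LaurentPolynomial ℤ) * T (-1) = 1 := by rw [← T_add]; norm_num [T_zero]
  have hTm1m1 : (T (-1) : LaurentPolynomial ℤ) * T (-1) = T (-2) := by rw [← T_add]; norm_num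
  -- expansion of c xe
  have hze1 : SM.δI.repr (C.c xe) xs = 0 := by
    by_contra hne
    have := aux_length_lt_of_bruhatLT (C.repr_lt xe xs hse hne)
    rw [hlS, hlE] at this; omega
  have hze2 : SM.δI.repr (C.c xe) xb = 0 := by
    by_contra hne
    have := aux_length_lt_of_bruhatLT (C.repr_lt xe xb hbe hne)
    rw [hlB, hlE] at this; omega
  have hce : C.c xe = SM.δI xe := by
    have h0 := expand (C.c xe)
    rw [C.repr_self xe, hze1, hze2, one_smul, zero_smul, zero_smul, add_zero, add_zero] at h0
    exact h0
  -- expansion of c xs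
  have hzs : SM.δI.repr (C.c xs) xb = 0 := by
    by_contra hne
    have := aux_length_lt_of_bruhatLT (C.repr_lt xs xb hbs hne)
    rw [hlB, hlS] at this; omega
  have hcs0 : C.c xs = SM.δI.repr (C.c xs) xe • SM.δI xe + SM.δI xs := by
    have h0 := expand (C.c xs)
    rw [C.repr_self xs, hzs, one_smul, zero_smul, add_zero] at h0
    exact h0
  have hp : SM.δI.repr (C.c xs) xe = T 1 := by
    apply aux_eq_T_of_skew _ 1 one_pos (C.repr_mem xs xe hes)
    have hbar := C.selfDual xs
    rw [hcs0] at hbar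
    rw [map_add, barN.bar_smul, hbare, hbars] at hbar
    have E := congrArg (fun z => SM.δI.repr z xe) hbar
    simp only [map_add, map_smul, Module.Basis.repr_self, Finsupp.add_apply, Finsupp.smul_apply,
      Finsupp.single_eq_same, Finsupp.single_eq_of_ne hse, smul_eq_mul, mul_one, mul_zero,
      add_zero, zero_add] at E
    linear_combination -E
  have hcs : C.c xs = (T 1 : LaurentPolynomial ℤ) • SM.δI xe + SM.δI xs := by
    rw [← hp]; exact hcs0
  -- expansion of c xb
  have hcb0 : C.c xb = SM.δI.repr (C.c xb) xe • SM.δI xe +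
      (SM.δI.repr (C.c xb) xs • SM.δI xs + SM.δI xb) := by
    have h0 := expand (C.c xb)
    rw [C.repr_self xb, one_smul] at h0
    exact h0
  have hbarcb := C.selfDual xb
  rw [hcb0] at hbarcb
  rw [map_add, map_add, barN.bar_smul, barN.bar_smul, hbare, hbars, hbarb] at hbarcb
  have hq : SM.δI.repr (C.c xb) xs = T 1 := by
    apply aux_eq_T_of_skew _ 1 one_pos (C.repr_mem xb xs hsb)
    have E := congrArg (fun z => SM.δI.repr z xs) hbarcb
    simp only [map_add, map_smul, Module.Basis.repr_self, Finsupp.add_apply, Finsupp.smul_apply,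
      Finsupp.single_eq_same, Finsupp.single_eq_of_ne' hes, Finsupp.single_eq_of_ne' hbs,
      smul_eq_mul, mul_one, mul_zero, add_zero, zero_add] at E
    linear_combination -E
  have hr : SM.δI.repr (C.c xb) xe = T 2 := by
    apply aux_eq_T_of_skew _ 2 two_pos (C.repr_mem xb xe heb)
    have E := congrArg (fun z => SM.δI.repr z xe) hbarcb
    simp only [map_add, map_smul, Module.Basis.repr_self, Finsupp.add_apply, Finsupp.smul_apply,
      Finsupp.single_eq_same, Finsupp.single_eq_of_ne' hse, Finsupp.single_eq_of_ne' hbe,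
      smul_eq_mul, mul_one, mul_zero, add_zero, zero_add] at E
    rw [hq, invert_T] at E
    linear_combination -E + hT11 - hTm1m1
  have hcb : C.c xb = (T 2 : LaurentPolynomial ℤ) • SM.δI xe +
      ((T 1 : LaurentPolynomial ℤ) • SM.δI xs + SM.δI xb) := by
    rw [← hq, ← hr]; exact hcb0
  -- the first inverse system: x = xs
  obtain ⟨-, heqs⟩ := hIM xs
  rw [finsum_eq_sum_of_fintype] at heqs
  rw [huniv, Finset.sum_insert hnm1, Finset.sum_insert hnm2, Finset.sum_singleton] at heqs
  rw [hce, hcs, hcb] at heqs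
  simp only [hlE, hlS, hlB] at heqs
  have E1 := congrArg (fun z => SM.δI.repr z xb) heqs
  have E2 := congrArg (fun z => SM.δI.repr z xs) heqs
  have E3 := congrArg (fun z => SM.δI.repr z xe) heqs
  simp only [map_add, map_smul, Module.Basis.repr_self, Finsupp.add_apply, Finsupp.smul_apply,
    Finsupp.single_eq_same, Finsupp.single_eq_of_ne' hes, Finsupp.single_eq_of_ne' hbs,
    Finsupp.single_eq_of_ne' hse, Finsupp.single_eq_of_ne' hbe, Finsupp.single_eq_of_ne' hsb,
    Finsupp.single_eq_of_ne' heb,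
    smul_eq_mul, mul_one, mul_zero, add_zero, zero_add] at E1 E2 E3
  have hm1 : minv xe xs = T 1 := by
    linear_combination E3 - T 1 * E2 + (T 1 * T 1 - T 2) * E1
  -- the second inverse system: x = xb
  obtain ⟨-, heqb⟩ := hIM xb
  rw [finsum_eq_sum_of_fintype] at heqb
  rw [huniv, Finset.sum_insert hnm1, Finset.sum_insert hnm2, Finset.sum_singleton] at heqb
  rw [hce, hcs, hcb] at heqb
  simp only [hlE, hlS, hlB] at heqb
  have F1 := congrArg (fun z => SM.δI.repr z xb) heqb
  have F2 := congrArg (fun z => SM.δI.repr z xs) heqb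
  have F3 := congrArg (fun z => SM.δI.repr z xe) heqb
  simp only [map_add, map_smul, Module.Basis.repr_self, Finsupp.add_apply, Finsupp.smul_apply,
    Finsupp.single_eq_same, Finsupp.single_eq_of_ne' hes, Finsupp.single_eq_of_ne' hbs,
    Finsupp.single_eq_of_ne' hse, Finsupp.single_eq_of_ne' hbe, Finsupp.single_eq_of_ne' hsb,
    Finsupp.single_eq_of_ne' heb,
    smul_eq_mul, mul_one, mul_zero, add_zero, zero_add] at F1 F2 F3
  have hn1 : minv xe xb = 0 := by
    linear_combination -F3 + T 1 * F2 + (T 2 - T 1 * T 1) * F1 + hT11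
  refine ⟨hm1, hn1, ?_⟩
  rw [hm1, hn1, mul_zero]
  intro hC
  have h1 := hC 1
  rw [T_apply] at h1
  simp at h1


end KLMonotonicity
end
end
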